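/- Let (W,S) be a dihedral Coxeter system (|S| = 2) and u,v ∈ W such that u ∨_R v exists in the right weak order. Then N(u ∨_R v) = ⟨N(u) ∪ N(v)⟩. -/

import Mathlib

/- Common definitions: reflections, inversion sets, Bruhat graph paths, Bruhat preclosure,
   twisted inversion sets, twisted lengths, twisted Bruhat graph/order, reflection orders,
   initial sections, and the right weak order, for a Coxeter system `cs`. -/

namespace CoxeterSystem

variable {B : Type*} {W : Type*} [Group W] {M : CoxeterMatrix B}
variable (cs : CoxeterSystem M W)

/-- The set of reflections `T`. -/
def reflSet : Set W := {t | cs.IsReflection t}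

/-- The inversion set `N(w) = {t ∈ T : ℓ(tw) < ℓ(w)}`. -/
def invSet (w : W) : Set W :=
  {t | cs.IsReflection t ∧ cs.length (t * w) < cs.length w}

/-- One step in the Bruhat graph using only edges labelled (on the right) by elements of `A`:
`u → u * t` with `t ∈ A` a reflection and `ℓ(u) < ℓ(u * t)`. -/
def AStep (A : Set W) (u v : W) : Prop :=
  ∃ t ∈ A, cs.IsReflection t ∧ v = u * t ∧ cs.length u < cs.length v

/-- The (right) Bruhat preclosure `⟨A⟩`: reflections reachable from the identity by a path in the
Bruhat graph all of whose edge labels lie in `A`. -/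
def bclosure (A : Set W) : Set W :=
  {t | cs.IsReflection t ∧ Relation.ReflTransGen (cs.AStep A) 1 t}

/-- The twisted inversion set `w · A = N(w) △ w A w⁻¹`. -/
def twisted (w : W) (A : Set W) : Set W :=
  symmDiff (cs.invSet w) ((fun x => w * x * w⁻¹) '' A)

/-- The twisted length `ℓ_A(v, w) = ℓ(w v⁻¹) - 2 |N(v w⁻¹) ∩ v · A|`. -/
noncomputable def tlen (A : Set W) (v w : W) : ℤ :=
  (cs.length (w * v⁻¹) : ℤ) - 2 * ((cs.invSet (v * w⁻¹)) ∩ cs.twisted v A).ncard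

/-- The one-argument twisted length `ℓ_A(w) = ℓ_A(e, w) = ℓ(w) - 2 |N(w⁻¹) ∩ A|`. -/
noncomputable def tlen₀ (A : Set W) (w : W) : ℤ :=
  (cs.length w : ℤ) - 2 * ((cs.invSet w⁻¹) ∩ A).ncard

/-- An edge of the twisted Bruhat graph `Ω_{(W,A)}`: Bruhat graph edges with labels not in `A`,
and reversed Bruhat graph edges with labels in `A`. -/
def TwEdge (A : Set W) (u v : W) : Prop :=
  (∃ t, cs.IsReflection t ∧ t ∉ A ∧ v = u * t ∧ cs.length u < cs.length v) ∨
  (∃ t, cs.IsReflection t ∧ t ∈ A ∧ u = v * t ∧ cs.length v < cs.length u)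

/-- The twisted Bruhat order `u ≤_A v`: reachability in the twisted Bruhat graph. -/
def tle (A : Set W) (u v : W) : Prop := Relation.ReflTransGen (cs.TwEdge A) u v

/-- A reflection subgroup: a subgroup generated by the reflections it contains. -/
def IsReflectionSubgroup (W' : Subgroup W) : Prop :=
  W' = Subgroup.closure ((W' : Set W) ∩ cs.reflSet)

/-- The canonical generators `χ(W') = {t ∈ T : N(t) ∩ W' = {t}}` of a reflection subgroup. -/
def chi (W' : Subgroup W) : Set W :=
  {t | cs.IsReflection t ∧ cs.invSet t ∩ (W' : Set W) = {t}}

/-- A reflection order: a strict total order on the set of reflections such that for every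
dihedral reflection subgroup `W'` with canonical generators `{r, s}`, `r ≠ s`, if `r ≺ s` then
every reflection of `W'` lies (weakly) between `r` and `s`.  (This betweenness condition for
*all* dihedral reflection subgroups is equivalent to the alternating-chain condition
`r ≺ rsr ≺ ⋯ ≺ srs ≺ s`.) -/
def IsReflectionOrder (lt : W → W → Prop) : Prop :=
  (∀ t ∈ cs.reflSet, ¬ lt t t) ∧
  (∀ t₁ ∈ cs.reflSet, ∀ t₂ ∈ cs.reflSet, ∀ t₃ ∈ cs.reflSet,
      lt t₁ t₂ → lt t₂ t₃ → lt t₁ t₃) ∧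
  (∀ t₁ ∈ cs.reflSet, ∀ t₂ ∈ cs.reflSet, t₁ = t₂ ∨ lt t₁ t₂ ∨ lt t₂ t₁) ∧
  (∀ W' : Subgroup W, cs.IsReflectionSubgroup W' →
    ∀ r s : W, cs.chi W' = {r, s} → r ≠ s → lt r s →
      ∀ t ∈ (W' : Set W) ∩ cs.reflSet, (t = r ∨ lt r t) ∧ (t = s ∨ lt t s))

/-- `A` is an initial section of some reflection order. -/
def IsInitialSection (A : Set W) : Prop :=
  A ⊆ cs.reflSet ∧ ∃ lt : W → W → Prop, cs.IsReflectionOrder lt ∧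
    ∀ a ∈ A, ∀ b ∈ cs.reflSet \ A, lt a b

/-- The right weak order, characterized by containment of inversion sets. -/
def wle (u v : W) : Prop := cs.invSet u ⊆ cs.invSet v

/-- `j` is the join `u ∨_R v` in the right weak order. -/
def IsJoin (u v j : W) : Prop :=
  cs.wle u j ∧ cs.wle v j ∧ ∀ z : W, cs.wle u z → cs.wle v z → cs.wle j z

/-- The Bruhat preclosure computed inside a subgroup `H` of `W` (for a standard parabolic
subgroup `H = W_I`, the length function and the reflections of `W_I` are the restrictions of
those of `W`, so this is the Bruhat preclosure of the Coxeter system `(W_I, I)`). -/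
def bclosureIn (H : Subgroup W) (A : Set W) : Set W :=
  {t | cs.IsReflection t ∧ t ∈ H ∧
    Relation.ReflTransGen (fun u v => u ∈ H ∧ v ∈ H ∧ cs.AStep A u v) 1 t}

end CoxeterSystem

namespace DihedralAux

open CoxeterSystem

variable {W : Type*} [Group W] {M : CoxeterMatrix (Fin 2)} (cs : CoxeterSystem M W)

local prefix:100 "s" => cs.simple
local notation "ℓ" => cs.length

/-- The rotation generator. -/
def g : W := cs.simple 0 * cs.simple 1

/-- Rotations. -/
def E (e : ℤ) : W := (g cs) ^ e

/-- Reflections. -/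
def F (e : ℤ) : W := (g cs) ^ e * cs.simple 0

/-- The Coxeter parameter. -/
def mm (_cs : CoxeterSystem M W) : ℕ := M 0 1

local notation "m" => (mm cs : ℤ)

lemma E_mul_E (a b : ℤ) : E cs a * E cs b = E cs (a + b) := by
  simp [E, zpow_add]

lemma simple_sq' (i : Fin 2) : (s i) * (s i) = 1 := cs.simple_mul_simple_self i

lemma s0_g_s0 : (s 0) * g cs * (s 0) = (g cs)⁻¹ := by
  have h1 : ((s 0) * (s 1))⁻¹ = (s 1)⁻¹ * (s 0)⁻¹ := by group
  have i0 : (s 0)⁻¹ = s 0 := cs.inv_simple 0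
  have i1 : (s 1)⁻¹ = s 1 := cs.inv_simple 1
  calc (s 0) * g cs * (s 0) = (s 0 * s 0) * (s 1 * s 0) := by
        simp [g, mul_assoc]
      _ = s 1 * s 0 := by rw [cs.simple_mul_simple_self 0, one_mul]
      _ = (g cs)⁻¹ := by rw [g, h1, i0, i1]

lemma s0_zpow (e : ℤ) : (s 0) * (g cs) ^ e * (s 0) = (g cs) ^ (-e) := by
  have h0 : (s 0)⁻¹ = s 0 := cs.inv_simple 0
  have : (s 0) * (g cs) ^ e * (s 0)⁻¹ = ((s 0) * (g cs) * (s 0)⁻¹)^e := (conj_zpow ..).symm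
  rw [h0] at this
  rw [this, s0_g_s0, inv_zpow, ← zpow_neg]

lemma F_mul_F (a b : ℤ) : F cs a * F cs b = E cs (a - b) := by
  have h : (s 0) * (g cs) ^ b = (g cs)^(-b) * (s 0) := by
    have := s0_zpow cs b
    calc (s 0) * (g cs) ^ b = ((s 0) * (g cs) ^ b * (s 0)) * (s 0) := by
          rw [mul_assoc, cs.simple_mul_simple_self 0, mul_one]
      _ = (g cs)^(-b) * (s 0) := by rw [this]
  calc F cs a * F cs b = (g cs)^a * ((s 0) * (g cs)^b) * (s 0) := by
        simp [F, mul_assoc]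
    _ = (g cs)^a * ((g cs)^(-b) * (s 0)) * (s 0) := by rw [h]
    _ = (g cs)^a * (g cs)^(-b) * ((s 0) * (s 0)) := by simp [mul_assoc]
    _ = E cs (a - b) := by
        rw [cs.simple_mul_simple_self 0, mul_one, ← zpow_add]
        simp [E, sub_eq_add_neg]

lemma E_mul_F (a b : ℤ) : E cs a * F cs b = F cs (a + b) := by
  simp [E, F, ← mul_assoc, ← zpow_add]

lemma F_mul_E (a b : ℤ) : F cs a * E cs b = F cs (a - b) := by
  have h : (s 0) * (g cs) ^ b = (g cs)^(-b) * (s 0) := by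
    have := s0_zpow cs b
    calc (s 0) * (g cs) ^ b = ((s 0) * (g cs) ^ b * (s 0)) * (s 0) := by
          rw [mul_assoc, cs.simple_mul_simple_self 0, mul_one]
      _ = (g cs)^(-b) * (s 0) := by rw [this]
  calc F cs a * E cs b = (g cs)^a * ((s 0) * (g cs)^b) := by simp [F, E, mul_assoc]
    _ = (g cs)^a * ((g cs)^(-b) * (s 0)) := by rw [h]
    _ = F cs (a - b) := by
        rw [← mul_assoc, ← zpow_add, F, sub_eq_add_neg]

lemma s0_eq : (s 0) = F cs 0 := by simp [F]

lemma s1_eq : (s 1) = F cs (-1) := by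
  have : F cs (-1) = (g cs)⁻¹ * (s 0) := by simp [F]
  rw [this, g]
  rw [mul_inv_rev, cs.inv_simple 0, cs.inv_simple 1, mul_assoc, cs.simple_mul_simple_self 0,
    mul_one]

lemma one_eq : (1 : W) = E cs 0 := by simp [E]

lemma F_inv (a : ℤ) : (F cs a)⁻¹ = F cs a := by
  have h := F_mul_F cs a a
  simp only [sub_self] at h
  rw [← one_eq] at h
  exact (inv_eq_of_mul_eq_one_right h).symm ▸ rfl

lemma E_inv (a : ℤ) : (E cs a)⁻¹ = E cs (-a) := by simp [E, ← zpow_neg]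

lemma s0_mul_E (e : ℤ) : (s 0) * E cs e = F cs (-e) := by
  rw [s0_eq, F_mul_E]; ring_nf

lemma s1_mul_E (e : ℤ) : (s 1) * E cs e = F cs (-1 - e) := by
  rw [s1_eq, F_mul_E]

lemma s0_mul_F (e : ℤ) : (s 0) * F cs e = E cs (-e) := by
  rw [s0_eq, F_mul_F]; ring_nf

lemma s1_mul_F (e : ℤ) : (s 1) * F cs e = E cs (-1 - e) := by
  rw [s1_eq, F_mul_F]

/-- Every element of a dihedral Coxeter group is a rotation or a reflection. -/
lemma surj (w : W) : (∃ e, w = E cs e) ∨ (∃ e, w = F cs e) := by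
  induction w using cs.simple_induction_left with
  | one => exact Or.inl ⟨0, one_eq cs⟩
  | mul_simple_left w i ih =>
    have hi : i = 0 ∨ i = 1 := by omega
    rcases ih with ⟨e, rfl⟩ | ⟨e, rfl⟩ <;> rcases hi with rfl | rfl
    · exact Or.inr ⟨-e, by rw [s0_mul_E]⟩
    · exact Or.inr ⟨-1 - e, by rw [s1_mul_E]⟩
    · exact Or.inl ⟨-e, by rw [s0_mul_F]⟩
    · exact Or.inl ⟨-1 - e, by rw [s1_mul_F]⟩

lemma gm_eq_one : E cs (mm cs : ℤ) = 1 := by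
  have := cs.simple_mul_simple_pow 0 1
  simp only [E, g, mm, zpow_natCast]
  exact this

lemma E_period (e : ℤ) (q : ℤ) : E cs (e + m * q) = E cs e := by
  have : E cs (m * q) = 1 := by
    have : E cs (m * q) = (E cs m) ^ q := by rw [E, E, ← zpow_mul]
    rw [this, gm_eq_one, one_zpow]
  rw [← E_mul_E, this, mul_one]

lemma F_period (e : ℤ) (q : ℤ) : F cs (e + m * q) = F cs e := by
  have : F cs (e + m * q) = E cs (e + m * q) * F cs 0 := by
    rw [E_mul_F, add_zero]
  rw [this, E_period, ← s0_eq]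
  rw [F, E]

lemma E_mod (e : ℤ) : E cs e = E cs (e % m) := by
  conv_lhs => rw [show e = e % m + m * (e / m) from by linarith [Int.emod_add_mul_ediv e m]]
  rw [E_period]

lemma F_mod (e : ℤ) : F cs e = F cs (e % m) := by
  conv_lhs => rw [show e = e % m + m * (e / m) from by linarith [Int.emod_add_mul_ediv e m]]
  rw [F_period]


/-! ### Separation via the concrete dihedral group -/

open DihedralGroup in
lemma phi_liftable : M.IsLiftable (fun i : Fin 2 => (if i = 0 then sr 0 else sr 1 : DihedralGroup (mm cs))) := by
  have hone : ∀ a : ZMod (mm cs), (sr a * sr a) ^ (1:ℕ) = 1 := by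
    intro a; simp [sr_mul_sr]
  have hr1 : ((r 1 : DihedralGroup (mm cs))) ^ (mm cs) = 1 := by
    rw [r_one_pow]; exact congrArg r (ZMod.natCast_self _)
  intro i i'
  have hi : i = 0 ∨ i = 1 := by omega
  have hi' : i' = 0 ∨ i' = 1 := by omega
  rcases hi with rfl | rfl <;> rcases hi' with rfl | rfl
  · rw [M.diagonal 0]; simpa using hone 0
  · show ((sr 0 : DihedralGroup (mm cs)) * sr 1) ^ (M 0 1) = 1
    have : (sr 0 : DihedralGroup (mm cs)) * sr 1 = r 1 := by simp [sr_mul_sr]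
    rw [this]; exact hr1
  · show ((sr 1 : DihedralGroup (mm cs)) * sr 0) ^ (M 1 0) = 1
    have h10 : M 1 0 = M 0 1 := M.symmetric 1 0
    have : (sr 1 : DihedralGroup (mm cs)) * sr 0 = (r 1)⁻¹ := by
      simp [sr_mul_sr]
    rw [this, h10, inv_pow]
    exact inv_eq_one.mpr hr1
  · rw [M.diagonal 1]; simpa using hone 1

/-- The separating homomorphism onto the concrete dihedral group. -/
noncomputable def phi : W →* DihedralGroup (mm cs) := cs.lift ⟨_, phi_liftable cs⟩

open DihedralGroup in
lemma phi_s0 : phi cs (cs.simple 0) = sr 0 := by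
  simp [phi, cs.lift_apply_simple (phi_liftable cs) 0]

open DihedralGroup in
lemma phi_s1 : phi cs (cs.simple 1) = sr 1 := by
  simp [phi, cs.lift_apply_simple (phi_liftable cs) 1]

open DihedralGroup in
lemma r_zpow (e : ℤ) : ((r 1 : DihedralGroup (mm cs))) ^ e = r (e : ZMod (mm cs)) := by
  obtain ⟨n, rfl | rfl⟩ := Int.eq_nat_or_neg e
  · rw [zpow_natCast, r_one_pow]; push_cast; rfl
  · rw [zpow_neg, zpow_natCast, r_one_pow]
    apply inv_eq_of_mul_eq_one_right
    rw [r_mul_r]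
    refine congrArg r ?_
    push_cast
    ring

open DihedralGroup in
lemma phi_E (e : ℤ) : phi cs (E cs e) = r (e : ZMod (mm cs)) := by
  have hg : phi cs (g cs) = r 1 := by
    rw [g, map_mul, phi_s0, phi_s1]
    simp [sr_mul_sr]
  rw [E, map_zpow, hg, r_zpow]

open DihedralGroup in
lemma phi_F (e : ℤ) : phi cs (F cs e) = sr (-e : ZMod (mm cs)) := by
  rw [F, map_mul, map_zpow, phi_s0]
  have hg : phi cs (g cs) = r 1 := by
    rw [g, map_mul, phi_s0, phi_s1]
    simp [sr_mul_sr]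
  rw [hg, r_zpow, r_mul_sr]
  refine congrArg sr ?_
  ring

lemma E_ne_F (a b : ℤ) : E cs a ≠ F cs b := by
  intro h
  have := congrArg (phi cs) h
  rw [phi_E, phi_F] at this
  cases this

lemma F_inj {a b : ℤ} (h : F cs a = F cs b) : (a - b) % (mm cs : ℤ) = 0 := by
  have hphi := congrArg (phi cs) h
  rw [phi_F, phi_F] at hphi
  have h2 : ((a : ZMod (mm cs))) = (b : ZMod (mm cs)) :=
    neg_inj.mp (DihedralGroup.sr.inj hphi)
  have h3 : (mm cs : ℤ) ∣ a - b := by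
    have := ((ZMod.intCast_eq_intCast_iff a b (mm cs)).mp h2).dvd
    rw [show a - b = -(b - a) by ring]; exact dvd_neg.mpr this
  exact Int.emod_eq_zero_of_dvd h3

lemma E_inj {a b : ℤ} (h : E cs a = E cs b) : (a - b) % (mm cs : ℤ) = 0 := by
  have hphi := congrArg (phi cs) h
  rw [phi_E, phi_E] at hphi
  have h2 : ((a : ZMod (mm cs))) = (b : ZMod (mm cs)) := DihedralGroup.r.inj hphi
  have h3 : (mm cs : ℤ) ∣ a - b := by
    have := ((ZMod.intCast_eq_intCast_iff a b (mm cs)).mp h2).dvd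
    rw [show a - b = -(b - a) by ring]; exact dvd_neg.mpr this
  exact Int.emod_eq_zero_of_dvd h3


/-! ### The mirror automorphism -/

lemma sg_liftable : M.IsLiftable (fun i : Fin 2 => (cs.simple (1 - i) : W)) := by
  intro i i'
  have hi : i = 0 ∨ i = 1 := by omega
  have hi' : i' = 0 ∨ i' = 1 := by omega
  rcases hi with rfl | rfl <;> rcases hi' with rfl | rfl
  · rw [M.diagonal 0]; simpa using cs.simple_mul_simple_self 1
  · show (cs.simple 1 * cs.simple 0) ^ (M 0 1) = 1
    rw [M.symmetric 0 1]; exact cs.simple_mul_simple_pow 1 0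
  · show (cs.simple 0 * cs.simple 1) ^ (M 1 0) = 1
    rw [M.symmetric 1 0]; exact cs.simple_mul_simple_pow 0 1
  · rw [M.diagonal 1]; simpa using cs.simple_mul_simple_self 0

/-- The automorphism exchanging the two simple reflections. -/
noncomputable def sg : W →* W := cs.lift ⟨_, sg_liftable cs⟩

lemma sg_simple (i : Fin 2) : sg cs (cs.simple i) = cs.simple (1 - i) :=
  cs.lift_apply_simple (sg_liftable cs) i

lemma sg_s0 : sg cs (cs.simple 0) = cs.simple 1 := sg_simple cs 0
lemma sg_s1 : sg cs (cs.simple 1) = cs.simple 0 := sg_simple cs 1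

lemma sg_sg (w : W) : sg cs (sg cs w) = w := by
  induction w using cs.simple_induction_left with
  | one => simp
  | mul_simple_left w i ih =>
    have hi : i = 0 ∨ i = 1 := by omega
    rcases hi with rfl | rfl <;>
      simp [map_mul, sg_s0, sg_s1, ih]

lemma sg_E (e : ℤ) : sg cs (E cs e) = E cs (-e) := by
  have hg : sg cs (g cs) = (g cs)⁻¹ := by
    rw [g, map_mul, sg_s0, sg_s1]
    rw [mul_inv_rev, cs.inv_simple 0, cs.inv_simple 1]
  rw [E, map_zpow, hg, inv_zpow, ← zpow_neg, E]

lemma sg_F (e : ℤ) : sg cs (F cs e) = F cs (-1 - e) := by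
  rw [F, map_mul, ← E, sg_E, sg_s0, s1_eq, E_mul_F]
  ring_nf

lemma sg_length_le (w : W) : cs.length (sg cs w) ≤ cs.length w := by
  obtain ⟨ω, hω, rfl⟩ := cs.exists_reduced_word' w
  have hmap : ∀ ω' : List (Fin 2), sg cs (cs.wordProd ω') = cs.wordProd (ω'.map (fun i => 1 - i)) := by
    intro ω'
    induction ω' with
    | nil => simp [cs.wordProd_nil]
    | cons a l ih => rw [cs.wordProd_cons, map_mul, sg_simple, ih, List.map_cons, cs.wordProd_cons]
  rw [hmap]
  calc cs.length (cs.wordProd (ω.map (fun i => 1 - i))) ≤ (ω.map (fun i => 1 - i)).length :=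
        cs.length_wordProd_le _
    _ = ω.length := List.length_map _
    _ = cs.length (cs.wordProd ω) := hω.symm

lemma sg_length (w : W) : cs.length (sg cs w) = cs.length w := by
  refine le_antisymm (sg_length_le cs w) ?_
  have := sg_length_le cs (sg cs w)
  rwa [sg_sg] at this

lemma sg_isReflection {t : W} (ht : cs.IsReflection t) : cs.IsReflection (sg cs t) := by
  obtain ⟨w, i, rfl⟩ := ht
  refine ⟨sg cs w, 1 - i, ?_⟩
  simp [map_mul, sg_simple]

lemma sg_mem_invSet {t w : W} (ht : t ∈ cs.invSet w) : sg cs t ∈ cs.invSet (sg cs w) := by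
  obtain ⟨h1, h2⟩ := ht
  refine ⟨sg_isReflection cs h1, ?_⟩
  rw [← map_mul, sg_length, sg_length]
  exact h2

lemma sg_invSet (w : W) : cs.invSet (sg cs w) = sg cs '' cs.invSet w := by
  ext t
  constructor
  · intro ht
    refine ⟨sg cs t, ?_, sg_sg cs t⟩
    have := sg_mem_invSet cs ht
    rwa [sg_sg] at this
  · rintro ⟨t', ht', rfl⟩
    exact sg_mem_invSet cs ht'

/-! ### Arithmetic: distance functions -/

/-- Distance function for rotations: half the length of `E e`. -/
def dE (e : ℤ) : ℤ := if (mm cs) = 0 then max e (-e) else min (e % m) (m - e % m)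

/-- Distance function for reflections: `ℓ (F e) = 2 * dF e + 1`. -/
def dF (e : ℤ) : ℤ := if (mm cs) = 0 then max e (-e - 1) else min (e % m) (m - 1 - e % m)

lemma emod_lb (hm : 0 < m) (e : ℤ) : 0 ≤ e % m := Int.emod_nonneg e (by omega)
lemma emod_ub (hm : 0 < m) (e : ℤ) : e % m < m := Int.emod_lt_of_pos e hm

lemma hmod (hm : 0 < m) {x : ℤ} (h1 : -m ≤ x) (h2 : x < 2 * m) :
    x % m = if x < 0 then x + m else if x < m then x else x - m := by
  split_ifs with hx hx'
  · have : (x + m) % m = x % m := by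
      have := Int.add_mul_emod_self_left (a := x) (b := m) (c := 1)
      simpa using this
    rw [← this]
    exact Int.emod_eq_of_lt (by omega) (by omega)
  · exact Int.emod_eq_of_lt (by omega) (by omega)
  · have : (x - m) % m = x % m := by
      have := Int.add_mul_emod_self_left (a := x - m) (b := m) (c := 1)
      simpa using this
    rw [← this]
    exact Int.emod_eq_of_lt (by omega) (by omega)

lemma neg_one_emod (hm : 0 < m) : (-1 : ℤ) % m = m - 1 := by
  rw [hmod cs hm (by omega) (by omega)]
  simp only [if_pos (by omega : (-1:ℤ) < 0)]
  ring

lemma neg_emod (hm : 0 < m) (e : ℤ) :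
    (-e) % m = if e % m = 0 then 0 else m - e % m := by
  have h1 := emod_lb cs hm e
  have h2 := emod_ub cs hm e
  have : (-e) % m = (0 - e % m) % m := by
    conv_lhs => rw [show -e = 0 - e by ring]
    rw [Int.sub_emod, Int.zero_emod]
  rw [this, hmod cs hm (by omega) (by omega)]
  split_ifs <;> omega

lemma neg_one_sub_emod (hm : 0 < m) (e : ℤ) : (-1 - e) % m = m - 1 - e % m := by
  have h1 := emod_lb cs hm e
  have h2 := emod_ub cs hm e
  have : (-1 - e) % m = ((-1) % m - e % m) % m := Int.sub_emod _ _ _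
  rw [this, neg_one_emod cs hm, hmod cs hm (by omega) (by omega)]
  split_ifs <;> omega

lemma dE_nonneg (e : ℤ) : 0 ≤ dE cs e := by
  rcases Nat.eq_zero_or_pos (mm cs) with h | h
  · simp only [dE, if_pos h]; omega
  · have hm : (0:ℤ) < m := by exact_mod_cast h
    have h1 := emod_lb cs hm e
    have h2 := emod_ub cs hm e
    simp only [dE, if_neg (by omega : ¬ (mm cs) = 0)]
    omega

lemma dF_nonneg (e : ℤ) : 0 ≤ dF cs e := by
  rcases Nat.eq_zero_or_pos (mm cs) with h | h
  · simp only [dF, if_pos h]; omega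
  · have hm : (0:ℤ) < m := by exact_mod_cast h
    have h1 := emod_lb cs hm e
    have h2 := emod_ub cs hm e
    simp only [dF, if_neg (by omega : ¬ (mm cs) = 0)]
    omega

lemma dE_zero {e : ℤ} (h : e % m = 0) : dE cs e = 0 := by
  rcases Nat.eq_zero_or_pos (mm cs) with h0 | h0
  · have : (m : ℤ) = 0 := by exact_mod_cast h0
    rw [this, Int.emod_zero] at h
    simp only [dE, if_pos h0, h]; omega
  · simp only [dE, if_neg (by omega : ¬ (mm cs) = 0), h]
    have hm : (0:ℤ) < m := by exact_mod_cast h0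
    omega

lemma dO1 (e : ℤ) : dE cs e ≤ dF cs (-e) + 1 := by
  rcases Nat.eq_zero_or_pos (mm cs) with h0 | h0
  · simp only [dE, dF, if_pos h0]; omega
  · have hm : (0:ℤ) < m := by exact_mod_cast h0
    have h1 := emod_lb cs hm e
    have h2 := emod_ub cs hm e
    simp only [dE, dF, if_neg (by omega : ¬ (mm cs) = 0)]
    rw [neg_emod cs hm e]
    split_ifs <;> omega

lemma dO2 (e : ℤ) : dE cs e ≤ dF cs (-1 - e) + 1 := by
  rcases Nat.eq_zero_or_pos (mm cs) with h0 | h0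
  · simp only [dE, dF, if_pos h0]; omega
  · have hm : (0:ℤ) < m := by exact_mod_cast h0
    have h1 := emod_lb cs hm e
    have h2 := emod_ub cs hm e
    simp only [dE, dF, if_neg (by omega : ¬ (mm cs) = 0)]
    rw [neg_one_sub_emod cs hm e]
    omega

lemma dO3 (e : ℤ) : dF cs e ≤ dE cs (-e) := by
  rcases Nat.eq_zero_or_pos (mm cs) with h0 | h0
  · simp only [dE, dF, if_pos h0]; omega
  · have hm : (0:ℤ) < m := by exact_mod_cast h0
    have h1 := emod_lb cs hm e
    have h2 := emod_ub cs hm e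
    simp only [dE, dF, if_neg (by omega : ¬ (mm cs) = 0)]
    rw [neg_emod cs hm e]
    split_ifs <;> omega

lemma dO4 (e : ℤ) : dF cs e ≤ dE cs (-1 - e) := by
  rcases Nat.eq_zero_or_pos (mm cs) with h0 | h0
  · simp only [dE, dF, if_pos h0]; omega
  · have hm : (0:ℤ) < m := by exact_mod_cast h0
    have h1 := emod_lb cs hm e
    have h2 := emod_ub cs hm e
    simp only [dE, dF, if_neg (by omega : ¬ (mm cs) = 0)]
    rw [neg_one_sub_emod cs hm e]
    omega

/-! ### Length formulas -/

lemma len_g_le : cs.length (g cs) ≤ 2 := by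
  have := cs.length_mul_le (cs.simple 0) (cs.simple 1)
  simpa [g, cs.length_simple] using this

lemma len_E_nat (k : ℕ) : cs.length (E cs (k : ℤ)) ≤ 2 * k := by
  induction k with
  | zero => simp [← one_eq]
  | succ k ih =>
    have : E cs ((k : ℤ) + 1) = E cs k * g cs := by
      rw [← E_mul_E]
      congr 1
      simp [E]
    rw [show ((k + 1 : ℕ) : ℤ) = (k : ℤ) + 1 by push_cast; ring, this]
    calc cs.length (E cs (k:ℤ) * g cs) ≤ cs.length (E cs (k:ℤ)) + cs.length (g cs) :=
          cs.length_mul_le _ _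
      _ ≤ 2 * k + 2 := by have := len_g_le cs; omega
      _ = 2 * (k + 1) := by ring

lemma len_E_le (e : ℤ) : (cs.length (E cs e) : ℤ) ≤ 2 * |e| := by
  obtain ⟨n, rfl | rfl⟩ := Int.eq_nat_or_neg e
  · have := len_E_nat cs n
    rw [abs_of_nonneg (by positivity : (0:ℤ) ≤ (n:ℤ))]
    exact_mod_cast this
  · have hinv : E cs (-(n:ℤ)) = (E cs (n:ℤ))⁻¹ := (E_inv cs (n:ℤ)).symm
    rw [hinv, cs.length_inv, abs_neg, abs_of_nonneg (by positivity : (0:ℤ) ≤ (n:ℤ))]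
    have := len_E_nat cs n
    exact_mod_cast this

lemma F_eq_E_mul (e : ℤ) : F cs e = E cs e * cs.simple 0 := by
  rw [s0_eq, E_mul_F, add_zero]

lemma F_eq_E_mul' (e : ℤ) : F cs e = E cs (e + 1) * cs.simple 1 := by
  rw [s1_eq, E_mul_F]
  ring_nf

lemma len_F_le (e : ℤ) : (cs.length (F cs e) : ℤ) ≤ 2 * |e| + 1 := by
  rw [F_eq_E_mul]
  have h1 := cs.length_mul_le (E cs e) (cs.simple 0)
  have h2 := len_E_le cs e
  have h3 := cs.length_simple 0
  omega

lemma len_F_le' (e : ℤ) : (cs.length (F cs e) : ℤ) ≤ 2 * |e + 1| + 1 := by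
  rw [F_eq_E_mul']
  have h1 := cs.length_mul_le (E cs (e+1)) (cs.simple 1)
  have h2 := len_E_le cs (e+1)
  have h3 := cs.length_simple 1
  omega

lemma len_E_ub (e : ℤ) : (cs.length (E cs e) : ℤ) ≤ 2 * dE cs e := by
  rcases Nat.eq_zero_or_pos (mm cs) with h0 | h0
  · have := len_E_le cs e
    simp only [dE, if_pos h0]
    cases abs_cases e <;> omega
  · have hm : (0:ℤ) < m := by exact_mod_cast h0
    have h1 := emod_lb cs hm e
    have h2 := emod_ub cs hm e
    have e1 : E cs e = E cs (e % m) := E_mod cs e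
    have e2 : E cs e = E cs (e % m - m) := by
      rw [e1, ← E_period cs (e % m - m) 1]
      congr 1; ring
    have b1 : (cs.length (E cs e) : ℤ) ≤ 2 * |e % m| := e1 ▸ len_E_le cs (e % m)
    have b2 : (cs.length (E cs e) : ℤ) ≤ 2 * |e % m - m| := e2 ▸ len_E_le cs (e % m - m)
    simp only [dE, if_neg (by omega : ¬ (mm cs) = 0)]
    cases abs_cases (e % m) <;> cases abs_cases (e % m - m) <;> omega

lemma len_F_ub (e : ℤ) : (cs.length (F cs e) : ℤ) ≤ 2 * dF cs e + 1 := by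
  rcases Nat.eq_zero_or_pos (mm cs) with h0 | h0
  · have ha := len_F_le cs e
    have hb := len_F_le' cs e
    simp only [dF, if_pos h0]
    cases abs_cases e <;> cases abs_cases (e + 1) <;> omega
  · have hm : (0:ℤ) < m := by exact_mod_cast h0
    have h1 := emod_lb cs hm e
    have h2 := emod_ub cs hm e
    have e1 : F cs e = F cs (e % m) := F_mod cs e
    have e2 : F cs e = F cs (e % m - m) := by
      rw [e1, ← F_period cs (e % m - m) 1]
      congr 1; ring
    have b1 : (cs.length (F cs e) : ℤ) ≤ 2 * |e % m| + 1 := e1 ▸ len_F_le cs (e % m)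
    have b2 : (cs.length (F cs e) : ℤ) ≤ 2 * |e % m - m + 1| + 1 := e2 ▸ len_F_le' cs (e % m - m)
    simp only [dF, if_neg (by omega : ¬ (mm cs) = 0)]
    cases abs_cases (e % m) <;> cases abs_cases (e % m - m + 1) <;> omega

lemma F_ne_one (e : ℤ) : F cs e ≠ 1 := fun h => E_ne_F cs 0 e ((one_eq cs) ▸ h.symm)

lemma len_lb (n : ℕ) : ∀ w : W, cs.length w = n →
    (∀ e, w = E cs e → 2 * dE cs e ≤ (cs.length w : ℤ)) ∧
    (∀ e, w = F cs e → 2 * dF cs e + 1 ≤ (cs.length w : ℤ)) := by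
  induction n using Nat.strong_induction_on with
  | _ n ih =>
    intro w hw
    by_cases h1 : w = 1
    · subst h1
      constructor
      · intro e he
        have h0 : E cs e = E cs 0 := he ▸ (one_eq cs) ▸ rfl
        have := E_inj cs h0
        rw [sub_zero] at this
        rw [dE_zero cs this]
        simp
      · intro e he
        exact absurd (he.trans rfl) (fun h => F_ne_one cs e (h ▸ he ▸ rfl))
    · obtain ⟨i, hi⟩ := cs.exists_leftDescent_of_ne_one h1
      have hlen : cs.length (cs.simple i * w) + 1 = cs.length w := by
        rcases cs.length_simple_mul w i with h | h
        · exfalso; have : cs.length (cs.simple i * w) < cs.length w := hi; omega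
        · exact h
      set w' := cs.simple i * w with hw'
      have hcan : w = cs.simple i * w' := by
        rw [hw', ← mul_assoc, cs.simple_mul_simple_self i, one_mul]
      have ihw' := ih (cs.length w') (by omega) w' rfl
      have hi2 : i = 0 ∨ i = 1 := by omega
      constructor
      · intro e he
        have hwE : w' = cs.simple i * E cs e := by rw [hw', he]
        rcases hi2 with rfl | rfl
        · rw [s0_mul_E] at hwE
          have := ihw'.2 (-e) hwE
          have hd := dO1 cs e
          omega
        · rw [s1_mul_E] at hwE
          have := ihw'.2 (-1 - e) hwE
          have hd := dO2 cs e
          omega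
      · intro e he
        have hwF : w' = cs.simple i * F cs e := by rw [hw', he]
        rcases hi2 with rfl | rfl
        · rw [s0_mul_F] at hwF
          have := ihw'.1 (-e) hwF
          have hd := dO3 cs e
          omega
        · rw [s1_mul_F] at hwF
          have := ihw'.1 (-1 - e) hwF
          have hd := dO4 cs e
          omega

lemma len_E (e : ℤ) : (cs.length (E cs e) : ℤ) = 2 * dE cs e :=
  le_antisymm (len_E_ub cs e) ((len_lb cs _ (E cs e) rfl).1 e rfl)

lemma len_F (e : ℤ) : (cs.length (F cs e) : ℤ) = 2 * dF cs e + 1 :=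
  le_antisymm (len_F_ub cs e) ((len_lb cs _ (F cs e) rfl).2 e rfl)

/-! ### Reflections and inversion sets -/

lemma F_isReflection (f : ℤ) : cs.IsReflection (F cs f) := by
  obtain ⟨k, hk | hk⟩ := Int.even_or_odd' f
  · refine ⟨E cs k, 0, ?_⟩
    rw [E_inv, s0_eq, E_mul_F, add_zero, F_mul_E]
    congr 1; omega
  · refine ⟨E cs (k+1), 1, ?_⟩
    rw [E_inv, s1_eq, E_mul_F, F_mul_E]
    congr 1; omega

lemma isRefl_iff (t : W) : cs.IsReflection t ↔ ∃ f, t = F cs f := by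
  constructor
  · rintro ⟨w, i, rfl⟩
    have hi : i = 0 ∨ i = 1 := by omega
    rcases surj cs w with ⟨e, rfl⟩ | ⟨e, rfl⟩ <;> rcases hi with rfl | rfl
    · exact ⟨2 * e, by rw [E_inv, s0_eq, E_mul_F, add_zero, F_mul_E]; congr 1; ring⟩
    · exact ⟨2 * e - 1, by rw [E_inv, s1_eq, E_mul_F, F_mul_E]; congr 1; ring⟩
    · refine ⟨2 * e, ?_⟩
      rw [F_inv, s0_eq, F_mul_F, sub_zero, E_mul_F]
      congr 1; ring
    · refine ⟨2 * e + 1, ?_⟩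
      rw [F_inv, s1_eq, F_mul_F, E_mul_F]
      congr 1; ring
  · rintro ⟨f, rfl⟩
    exact F_isReflection cs f

lemma F_mem_invSet_E {f c : ℤ} :
    F cs f ∈ cs.invSet (E cs c) ↔ dF cs (f - c) < dE cs c := by
  have hmul : F cs f * E cs c = F cs (f - c) := F_mul_E cs f c
  constructor
  · rintro ⟨-, hlen⟩
    rw [hmul] at hlen
    have l1 := len_F cs (f - c)
    have l2 := len_E cs c
    omega
  · intro h
    refine ⟨F_isReflection cs f, ?_⟩
    rw [hmul]
    have l1 := len_F cs (f - c)
    have l2 := len_E cs c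
    omega

lemma F_mem_invSet_F {f c : ℤ} :
    F cs f ∈ cs.invSet (F cs c) ↔ dE cs (f - c) ≤ dF cs c := by
  have hmul : F cs f * F cs c = E cs (f - c) := F_mul_F cs f c
  constructor
  · rintro ⟨-, hlen⟩
    rw [hmul] at hlen
    have l1 := len_E cs (f - c)
    have l2 := len_F cs c
    omega
  · intro h
    refine ⟨F_isReflection cs f, ?_⟩
    rw [hmul]
    have l1 := len_E cs (f - c)
    have l2 := len_F cs c
    omega

lemma invSet_one : cs.invSet 1 = ∅ := by
  ext t
  simp only [CoxeterSystem.invSet, Set.mem_setOf_eq, Set.mem_empty_iff_false, iff_false]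
  rintro ⟨-, h⟩
  simp [cs.length_one] at h

/-- The fundamental "right chain" characterization: if `s 0` is an inversion of `w`,
then the inversions of `w` are exactly `F f` for `f % m < ℓ w`. -/
lemma right_char {w : W} (hs0 : cs.simple 0 ∈ cs.invSet w) (f : ℤ) :
    F cs f ∈ cs.invSet w ↔ (0 ≤ f % m ∧ f % m < (cs.length w : ℤ)) := by
  rcases surj cs w with ⟨c, rfl⟩ | ⟨c, rfl⟩
  · rw [s0_eq] at hs0
    rw [F_mem_invSet_E] at hs0
    rw [F_mem_invSet_E]
    rw [zero_sub] at hs0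
    have hlw := len_E cs c
    rcases Nat.eq_zero_or_pos (mm cs) with h0 | h0
    · have hm0 : (m : ℤ) = 0 := by exact_mod_cast h0
      simp only [dE, dF, if_pos h0] at *
      rw [hm0, Int.emod_zero]
      omega
    · have hm : (0:ℤ) < m := by exact_mod_cast h0
      have hr1 := emod_lb cs hm c
      have hr2 := emod_ub cs hm c
      have hp1 := emod_lb cs hm f
      have hp2 := emod_ub cs hm f
      have key : (f - c) % m = ((f % m) - (c % m)) % m := Int.sub_emod _ _ _
      rw [hmod cs hm (x := (f % m) - (c % m)) (by omega) (by omega)] at key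
      simp only [dE, dF, if_neg (by omega : ¬ (mm cs) = 0)] at hs0 hlw ⊢
      rw [neg_emod cs hm c] at hs0
      rw [key]
      split_ifs at hs0 ⊢ <;> omega
  · rw [s0_eq] at hs0
    rw [F_mem_invSet_F] at hs0
    rw [F_mem_invSet_F]
    rw [zero_sub] at hs0
    have hlw := len_F cs c
    rcases Nat.eq_zero_or_pos (mm cs) with h0 | h0
    · have hm0 : (m : ℤ) = 0 := by exact_mod_cast h0
      simp only [dE, dF, if_pos h0] at *
      rw [hm0, Int.emod_zero]
      omega
    · have hm : (0:ℤ) < m := by exact_mod_cast h0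
      have hr1 := emod_lb cs hm c
      have hr2 := emod_ub cs hm c
      have hp1 := emod_lb cs hm f
      have hp2 := emod_ub cs hm f
      have key : (f - c) % m = ((f % m) - (c % m)) % m := Int.sub_emod _ _ _
      rw [hmod cs hm (x := (f % m) - (c % m)) (by omega) (by omega)] at key
      simp only [dE, dF, if_neg (by omega : ¬ (mm cs) = 0)] at hs0 hlw ⊢
      rw [neg_emod cs hm c] at hs0
      rw [key]
      split_ifs at hs0 ⊢ <;> omega

lemma mem_invSet_iff_sg {t w : W} : t ∈ cs.invSet w ↔ sg cs t ∈ cs.invSet (sg cs w) := by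
  constructor
  · exact sg_mem_invSet cs
  · intro h
    have := sg_mem_invSet cs h
    rwa [sg_sg, sg_sg] at this

lemma left_char {w : W} (hs1 : cs.simple 1 ∈ cs.invSet w) (f : ℤ) :
    F cs f ∈ cs.invSet w ↔ (0 ≤ (-1 - f) % m ∧ (-1 - f) % m < (cs.length w : ℤ)) := by
  have hs0 : cs.simple 0 ∈ cs.invSet (sg cs w) := by
    have := sg_mem_invSet cs hs1
    rwa [sg_s1] at this
  have h1 : F cs f ∈ cs.invSet w ↔ F cs (-1 - f) ∈ cs.invSet (sg cs w) := by
    rw [mem_invSet_iff_sg cs (t := F cs f), sg_F]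
  rw [h1, right_char cs hs0 (-1 - f), sg_length]

lemma m_pos_of_both {w : W} (hs0 : cs.simple 0 ∈ cs.invSet w)
    (hs1 : cs.simple 1 ∈ cs.invSet w) : 0 < mm cs := by
  by_contra h0
  have h0' : mm cs = 0 := by omega
  have := (right_char cs hs0 (-1)).mpr
  have h1 : F cs (-1) ∈ cs.invSet w := s1_eq cs ▸ hs1
  have h2 := (right_char cs hs0 (-1)).mp h1
  have hm0 : (m : ℤ) = 0 := by exact_mod_cast h0'
  rw [hm0, Int.emod_zero] at h2
  omega

lemma full_invSet {w : W} (hs0 : cs.simple 0 ∈ cs.invSet w)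
    (hs1 : cs.simple 1 ∈ cs.invSet w) : cs.invSet w = cs.reflSet := by
  apply Set.eq_of_subset_of_subset
  · intro t ht
    exact ht.1
  · intro t ht
    obtain ⟨f, rfl⟩ := (isRefl_iff cs t).mp ht
    have hmpos := m_pos_of_both cs hs0 hs1
    have hm : (0:ℤ) < m := by exact_mod_cast hmpos
    have h1 : F cs (-1) ∈ cs.invSet w := s1_eq cs ▸ hs1
    have h2 := (right_char cs hs0 (-1)).mp h1
    rw [neg_one_emod cs hm] at h2
    rw [right_char cs hs0 f]
    have hp1 := emod_lb cs hm f
    have hp2 := emod_ub cs hm f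
    omega

/-! ### Bruhat preclosure basics -/

lemma not_isReflection_one : ¬ cs.IsReflection (1 : W) := by
  intro h
  obtain ⟨f, hf⟩ := (isRefl_iff cs 1).mp h
  exact F_ne_one cs f hf.symm

lemma bclosure_subset_reflSet (A : Set W) : cs.bclosure A ⊆ cs.reflSet :=
  fun _ ht => ht.1

lemma length_pos_of_isReflection {t : W} (ht : cs.IsReflection t) : 0 < cs.length t := by
  rcases Nat.eq_zero_or_pos (cs.length t) with h | h
  · exact absurd (cs.length_eq_zero_iff.mp h ▸ ht) (not_isReflection_one cs)
  · exact h

lemma subset_bclosure {A : Set W} (hA : A ⊆ cs.reflSet) : A ⊆ cs.bclosure A := by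
  intro t ht
  have htr : cs.IsReflection t := hA ht
  refine ⟨htr, Relation.ReflTransGen.single ⟨t, ht, htr, (one_mul t).symm, ?_⟩⟩
  rw [cs.length_one]
  exact (cs.length_one ▸ length_pos_of_isReflection cs htr : 0 < cs.length t)

lemma bclosure_mono {A B : Set W} (hAB : A ⊆ B) : cs.bclosure A ⊆ cs.bclosure B := by
  rintro t ⟨htr, hpath⟩
  refine ⟨htr, Relation.ReflTransGen.mono ?_ _ _ hpath⟩
  rintro x y ⟨t', ht', h2, h3, h4⟩
  exact ⟨t', hAB ht', h2, h3, h4⟩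

lemma bclosure_empty : cs.bclosure (∅ : Set W) = ∅ := by
  ext t
  simp only [Set.mem_empty_iff_false, iff_false]
  rintro ⟨htr, hpath⟩
  have : t = 1 := by
    induction hpath with
    | refl => rfl
    | tail h hstep ih => exact absurd hstep.choose_spec.1 (Set.notMem_empty _)
  exact not_isReflection_one cs (this ▸ htr)

lemma sg_rtg {A : Set W} {a b : W} (h : Relation.ReflTransGen (cs.AStep A) a b) :
    Relation.ReflTransGen (cs.AStep ((sg cs) '' A)) (sg cs a) (sg cs b) := by
  induction h with
  | refl => exact Relation.ReflTransGen.refl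
  | tail h hstep ih =>
    refine Relation.ReflTransGen.tail ih ?_
    obtain ⟨t', ht', h2, h3, h4⟩ := hstep
    exact ⟨sg cs t', Set.mem_image_of_mem _ ht', sg_isReflection cs h2,
      by rw [h3, map_mul], by rw [sg_length, sg_length]; exact h4⟩

lemma sg_bclosure {A : Set W} {t : W} (ht : t ∈ cs.bclosure A) :
    sg cs t ∈ cs.bclosure ((sg cs) '' A) := by
  obtain ⟨htr, hpath⟩ := ht
  refine ⟨sg_isReflection cs htr, ?_⟩
  have := sg_rtg cs hpath
  rwa [map_one] at this

/-! ### The invariant: the preclosure of an inversion set is itself -/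

lemma simple_mem_invSet {w : W} {i : Fin 2} (hi : cs.IsLeftDescent w i) :
    cs.simple i ∈ cs.invSet w :=
  ⟨cs.isReflection_simple i, hi⟩

lemma invSet_empty_of {w : W} (h0 : cs.simple 0 ∉ cs.invSet w)
    (h1 : cs.simple 1 ∉ cs.invSet w) : cs.invSet w = ∅ := by
  by_cases hw : w = 1
  · rw [hw]; exact invSet_one cs
  · obtain ⟨i, hi⟩ := cs.exists_leftDescent_of_ne_one hw
    have : i = 0 ∨ i = 1 := by omega
    rcases this with rfl | rfl
    · exact absurd (simple_mem_invSet cs hi) h0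
    · exact absurd (simple_mem_invSet cs hi) h1

lemma length_pos_of_mem_invSet {w t : W} (ht : t ∈ cs.invSet w) : 0 < cs.length w := by
  rcases Nat.eq_zero_or_pos (cs.length w) with h | h
  · rw [cs.length_eq_zero_iff.mp h, invSet_one cs] at ht
    exact absurd ht (Set.notMem_empty _)
  · exact h

lemma rinv {w : W} (hs0 : cs.simple 0 ∈ cs.invSet w) (hs1 : cs.simple 1 ∉ cs.invSet w) :
    cs.bclosure (cs.invSet w) ⊆ cs.invSet w := by
  set nw : ℤ := (cs.length w : ℤ) with hnw
  have hnw1 : 1 ≤ nw := by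
    have := length_pos_of_mem_invSet cs hs0
    omega
  -- the key bound `nw ≤ m - 1` when `m > 0`
  have hnwm : 0 < mm cs → nw ≤ m - 1 := by
    intro hmp
    have hm : (0:ℤ) < m := by exact_mod_cast hmp
    have h1 : F cs (-1) ∉ cs.invSet w := fun h => hs1 (s1_eq cs ▸ h)
    have h2 := (right_char cs hs0 (-1)).not.mp h1
    rw [neg_one_emod cs hm] at h2
    omega
  -- preservation of the invariant
  have pres : ∀ x y : W,
      (x = 1 ∨ x ∈ cs.invSet w ∨ ∃ e, x = E cs e ∧ 1 ≤ (-e) % m ∧ (-e) % m ≤ nw - 1) →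
      cs.AStep (cs.invSet w) x y →
      (y = 1 ∨ y ∈ cs.invSet w ∨ ∃ e, y = E cs e ∧ 1 ≤ (-e) % m ∧ (-e) % m ≤ nw - 1) := by
    rintro x y hINV ⟨t, htA, htrefl, rfl, hlen⟩
    obtain ⟨f, rfl⟩ := (isRefl_iff cs t).mp htrefl
    have hf := (right_char cs hs0 f).mp htA
    rcases hINV with rfl | hx | ⟨e, rfl, hd1, hd2⟩
    · right; left
      rwa [one_mul]
    · -- x is an inversion, hence a reflection F k
      obtain ⟨k, rfl⟩ := (isRefl_iff cs x).mp hx.1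
      have hk := (right_char cs hs0 k).mp hx
      rw [F_mul_F] at hlen ⊢
      have hlZ : (cs.length (F cs k) : ℤ) < (cs.length (E cs (k - f)) : ℤ) := by
        exact_mod_cast hlen
      rw [len_F, len_E] at hlZ
      have harith : 1 ≤ (-(k - f)) % m ∧ (-(k - f)) % m ≤ nw - 1 := by
        rw [show -(k - f) = f - k by ring]
        rcases Nat.eq_zero_or_pos (mm cs) with h0 | h0
        · have hm0 : (m:ℤ) = 0 := by exact_mod_cast h0
          simp only [dE, dF, if_pos h0] at hlZ
          rw [hm0] at hk hf ⊢
          simp only [Int.emod_zero] at hk hf ⊢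
          omega
        · have hm : (0:ℤ) < m := by exact_mod_cast h0
          have hb := hnwm h0
          have hk1 := emod_lb cs hm k
          have hk2 := emod_ub cs hm k
          have hf1 := emod_lb cs hm f
          have hf2 := emod_ub cs hm f
          have keyq : (f - k) % m = ((f % m) - (k % m)) % m := Int.sub_emod _ _ _
          rw [hmod cs hm (x := (f % m) - (k % m)) (by omega) (by omega)] at keyq
          simp only [dE, dF, if_neg (by omega : ¬ (mm cs) = 0)] at hlZ
          rw [show k - f = -(f - k) by ring, neg_emod cs hm (f - k)] at hlZ
          rw [keyq] at hlZ ⊢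
          split_ifs at hlZ ⊢ <;> omega
      exact Or.inr (Or.inr ⟨k - f, rfl, harith.1, harith.2⟩)
    · rw [E_mul_F] at hlen ⊢
      have hlZ : (cs.length (E cs e) : ℤ) < (cs.length (F cs (e + f)) : ℤ) := by
        exact_mod_cast hlen
      rw [len_E, len_F] at hlZ
      right; left
      refine (right_char cs hs0 (e + f)).mpr ?_
      rcases Nat.eq_zero_or_pos (mm cs) with h0 | h0
      · have hm0 : (m:ℤ) = 0 := by exact_mod_cast h0
        simp only [dE, dF, if_pos h0] at hlZ
        rw [hm0] at hd1 hd2 hf ⊢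
        simp only [Int.emod_zero] at hd1 hd2 hf ⊢
        omega
      · have hm : (0:ℤ) < m := by exact_mod_cast h0
        have hb := hnwm h0
        have he1 := emod_lb cs hm e
        have he2 := emod_ub cs hm e
        have hf1 := emod_lb cs hm f
        have hf2 := emod_ub cs hm f
        have he := neg_emod cs hm (-e)
        rw [neg_neg] at he
        have keyp : (e + f) % m = ((e % m) + (f % m)) % m := Int.add_emod _ _ _
        rw [hmod cs hm (x := (e % m) + (f % m)) (by omega) (by omega)] at keyp
        simp only [dE, dF, if_neg (by omega : ¬ (mm cs) = 0)] at hlZ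
        rw [keyp] at hlZ ⊢
        rw [he] at hlZ ⊢
        split_ifs at hlZ ⊢ <;> omega
  -- main induction along the path
  rintro t ⟨htr, hpath⟩
  have hINVt : t = 1 ∨ t ∈ cs.invSet w ∨ ∃ e, t = E cs e ∧ 1 ≤ (-e) % m ∧ (-e) % m ≤ nw - 1 := by
    clear htr
    induction hpath with
    | refl => exact Or.inl rfl
    | tail h hstep ih => exact pres _ _ ih hstep
  rcases hINVt with rfl | h | ⟨e, rfl, -, -⟩
  · exact absurd htr (not_isReflection_one cs)
  · exact h
  · obtain ⟨f, hf⟩ := (isRefl_iff cs _).mp htr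
    exact absurd hf (E_ne_F cs e f)

lemma linv {w : W} (hs1 : cs.simple 1 ∈ cs.invSet w) (hs0 : cs.simple 0 ∉ cs.invSet w) :
    cs.bclosure (cs.invSet w) ⊆ cs.invSet w := by
  intro x hx
  have hs0' : cs.simple 0 ∈ cs.invSet (sg cs w) := by
    have := sg_mem_invSet cs hs1
    rwa [sg_s1] at this
  have hs1' : cs.simple 1 ∉ cs.invSet (sg cs w) := by
    intro h
    have := sg_mem_invSet cs h
    rw [sg_s1, sg_sg] at this
    exact hs0 this
  have hximg : sg cs x ∈ cs.bclosure (cs.invSet (sg cs w)) := by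
    have := sg_bclosure cs hx
    rwa [← sg_invSet] at this
  have := rinv cs hs0' hs1' hximg
  exact (mem_invSet_iff_sg cs).mpr this

lemma bcl_self (w : W) : cs.bclosure (cs.invSet w) = cs.invSet w := by
  apply Set.Subset.antisymm
  · by_cases h0 : cs.simple 0 ∈ cs.invSet w
    · by_cases h1 : cs.simple 1 ∈ cs.invSet w
      · rw [full_invSet cs h0 h1]
        exact bclosure_subset_reflSet cs _
      · exact rinv cs h0 h1
    · by_cases h1 : cs.simple 1 ∈ cs.invSet w
      · exact linv cs h1 h0
      · rw [invSet_empty_of cs h0 h1, bclosure_empty]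
  · exact subset_bclosure cs (fun t ht => ht.1)

/-! ### Nestedness and dichotomy -/

lemma nested_right {w1 w2 : W} (h1 : cs.simple 0 ∈ cs.invSet w1)
    (h2 : cs.simple 0 ∈ cs.invSet w2) :
    cs.invSet w1 ⊆ cs.invSet w2 ∨ cs.invSet w2 ⊆ cs.invSet w1 := by
  rcases le_total (cs.length w1) (cs.length w2) with h | h
  · left
    intro t ht
    obtain ⟨f, rfl⟩ := (isRefl_iff cs t).mp ht.1
    have hc := (right_char cs h1 f).mp ht
    exact (right_char cs h2 f).mpr ⟨hc.1, by omega⟩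
  · right
    intro t ht
    obtain ⟨f, rfl⟩ := (isRefl_iff cs t).mp ht.1
    have hc := (right_char cs h2 f).mp ht
    exact (right_char cs h1 f).mpr ⟨hc.1, by omega⟩

lemma nested_left {w1 w2 : W} (h1 : cs.simple 1 ∈ cs.invSet w1)
    (h2 : cs.simple 1 ∈ cs.invSet w2) :
    cs.invSet w1 ⊆ cs.invSet w2 ∨ cs.invSet w2 ⊆ cs.invSet w1 := by
  rcases le_total (cs.length w1) (cs.length w2) with h | h
  · left
    intro t ht
    obtain ⟨f, rfl⟩ := (isRefl_iff cs t).mp ht.1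
    have hc := (left_char cs h1 f).mp ht
    exact (left_char cs h2 f).mpr ⟨hc.1, by omega⟩
  · right
    intro t ht
    obtain ⟨f, rfl⟩ := (isRefl_iff cs t).mp ht.1
    have hc := (left_char cs h2 f).mp ht
    exact (left_char cs h1 f).mpr ⟨hc.1, by omega⟩

lemma dichotomy (w1 w2 : W) : cs.invSet w1 ⊆ cs.invSet w2 ∨ cs.invSet w2 ⊆ cs.invSet w1 ∨
    (cs.simple 0 ∈ cs.invSet w1 ∪ cs.invSet w2 ∧ cs.simple 1 ∈ cs.invSet w1 ∪ cs.invSet w2) := by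
  by_cases h10 : cs.simple 0 ∈ cs.invSet w1
  · by_cases h20 : cs.simple 0 ∈ cs.invSet w2
    · rcases nested_right cs h10 h20 with h | h
      · exact Or.inl h
      · exact Or.inr (Or.inl h)
    · by_cases h21 : cs.simple 1 ∈ cs.invSet w2
      · exact Or.inr (Or.inr ⟨Or.inl h10, Or.inr h21⟩)
      · exact Or.inr (Or.inl ((invSet_empty_of cs h20 h21) ▸ Set.empty_subset _))
  · by_cases h11 : cs.simple 1 ∈ cs.invSet w1
    · by_cases h21 : cs.simple 1 ∈ cs.invSet w2
      · rcases nested_left cs h11 h21 with h | h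
        · exact Or.inl h
        · exact Or.inr (Or.inl h)
      · by_cases h20 : cs.simple 0 ∈ cs.invSet w2
        · exact Or.inr (Or.inr ⟨Or.inr h20, Or.inl h11⟩)
        · exact Or.inr (Or.inl ((invSet_empty_of cs h20 h21) ▸ Set.empty_subset _))
    · exact Or.inl ((invSet_empty_of cs h10 h11) ▸ Set.empty_subset _)

/-! ### Reachability when both simple reflections are available -/

lemma dE_small (hmp : 0 < mm cs) {x : ℤ} (h1 : 0 ≤ x) (h2 : 2 * x ≤ m) : dE cs x = x := by
  have hm : (0:ℤ) < m := by exact_mod_cast hmp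
  have hx : x % m = x := Int.emod_eq_of_lt h1 (by omega)
  simp only [dE, if_neg (by omega : ¬ (mm cs) = 0), hx]
  omega

lemma dF_small (hmp : 0 < mm cs) {x : ℤ} (h1 : 0 ≤ x) (h2 : 2 * x + 1 ≤ m) : dF cs x = x := by
  have hm : (0:ℤ) < m := by exact_mod_cast hmp
  have hx : x % m = x := Int.emod_eq_of_lt h1 (by omega)
  simp only [dF, if_neg (by omega : ¬ (mm cs) = 0), hx]
  omega

lemma reach (hmp : 0 < mm cs) :
    cs.reflSet ⊆ cs.bclosure {cs.simple 0, cs.simple 1} := by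
  have hm : (0:ℤ) < m := by exact_mod_cast hmp
  set S : Set W := {cs.simple 0, cs.simple 1} with hS
  have hs0S : cs.simple 0 ∈ S := Set.mem_insert _ _
  have hs1S : cs.simple 1 ∈ S := Set.mem_insert_of_mem _ rfl
  have climb : ∀ k : ℕ,
      (2 * (k:ℤ) ≤ m → Relation.ReflTransGen (cs.AStep S) 1 (E cs (k:ℤ))) ∧
      (2 * (k:ℤ) + 1 ≤ m → Relation.ReflTransGen (cs.AStep S) 1 (F cs (k:ℤ))) := by
    intro k
    induction k with
    | zero =>
      constructor
      · intro _
        rw [show ((0:ℕ):ℤ) = 0 by norm_num, ← one_eq]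
      · intro h
        refine Relation.ReflTransGen.single
          ⟨cs.simple 0, hs0S, cs.isReflection_simple 0, ?_, ?_⟩
        · rw [one_mul, show ((0:ℕ):ℤ) = 0 by norm_num, ← s0_eq]
        · have lF := len_F cs ((0:ℕ):ℤ)
          have dn := dF_nonneg cs ((0:ℕ):ℤ)
          rw [cs.length_one]
          omega
    | succ k ih =>
      have hcast : ((k+1 : ℕ) : ℤ) = (k:ℤ) + 1 := by push_cast; ring
      have hE : 2 * ((k:ℤ) + 1) ≤ m → Relation.ReflTransGen (cs.AStep S) 1 (E cs ((k:ℤ)+1)) := by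
        intro h
        refine Relation.ReflTransGen.tail (ih.2 (by omega))
          ⟨cs.simple 1, hs1S, cs.isReflection_simple 1, ?_, ?_⟩
        · rw [s1_eq, F_mul_F, show (k:ℤ) - (-1) = (k:ℤ) + 1 from by ring]
        · have l1 := len_F cs (k:ℤ)
          have l2 := len_E cs ((k:ℤ)+1)
          have d1 := dF_small cs hmp (x := (k:ℤ)) (by positivity) (by omega)
          have d2 := dE_small cs hmp (x := (k:ℤ)+1) (by positivity) (by omega)
          omega
      constructor
      · intro h
        rw [hcast] at h ⊢
        exact hE h
      · intro h
        rw [hcast] at h ⊢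
        refine Relation.ReflTransGen.tail (hE (by omega))
          ⟨cs.simple 0, hs0S, cs.isReflection_simple 0, ?_, ?_⟩
        · rw [s0_eq, E_mul_F, add_zero]
        · have l1 := len_E cs ((k:ℤ)+1)
          have l2 := len_F cs ((k:ℤ)+1)
          have d1 := dE_small cs hmp (x := (k:ℤ)+1) (by positivity) (by omega)
          have d2 := dF_small cs hmp (x := (k:ℤ)+1) (by positivity) (by omega)
          omega
  -- coverage
  rintro t ht
  obtain ⟨f, rfl⟩ := (isRefl_iff cs t).mp ht
  have hr1 := emod_lb cs hm f
  have hr2 := emod_ub cs hm f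
  have hFf : F cs f = F cs (f % m) := F_mod cs f
  by_cases hcase : 2 * (f % m) + 1 ≤ m
  · set k : ℕ := (f % m).toNat with hk
    have hkk : (k:ℤ) = f % m := Int.toNat_of_nonneg hr1
    have hpath := (climb k).2 (by omega)
    refine ⟨ht, ?_⟩
    rw [hFf, ← hkk]
    exact hpath
  · set k : ℕ := (m - 1 - f % m).toNat with hk
    have hkk : (k:ℤ) = m - 1 - f % m := Int.toNat_of_nonneg (by omega)
    have hpath := (climb k).2 (by omega)
    have h2 := sg_rtg cs hpath
    rw [map_one, sg_F] at h2
    have himg : (sg cs) '' S = S := by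
      rw [hS, Set.image_pair, sg_s0, sg_s1, Set.pair_comm]
    rw [himg] at h2
    refine ⟨ht, ?_⟩
    have heq : F cs f = F cs (-1 - (k:ℤ)) := by
      rw [hFf, hkk, show -1 - (m - 1 - f % m) = (f % m - m) by ring]
      conv_lhs => rw [show f % m = (f % m - m) + m * 1 from by ring]
      rw [F_period]
    rw [heq]
    exact h2

end DihedralAux



open CoxeterSystem in
/-- In a dihedral Coxeter system (two simple reflections), if the join `u ∨_R v` exists in the
right weak order then `N(u ∨_R v) = ⟨N(u) ∪ N(v)⟩`. -/
theorem invSet_join_eq_bclosure_dihedral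
    {W : Type*} [Group W] {M : CoxeterMatrix (Fin 2)} (cs : CoxeterSystem M W)
    (u v j : W) (hjoin : cs.IsJoin u v j) :
    cs.invSet j = cs.bclosure (cs.invSet u ∪ cs.invSet v) := by
  obtain ⟨hu, hv, hmin⟩ := hjoin
  have hu' : cs.invSet u ⊆ cs.invSet j := hu
  have hv' : cs.invSet v ⊆ cs.invSet j := hv
  rcases DihedralAux.dichotomy cs u v with hUV | hVU | ⟨hs0, hs1⟩
  · have hA : cs.invSet u ∪ cs.invSet v = cs.invSet v :=
      Set.union_eq_self_of_subset_left hUV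
    have hj : cs.invSet j = cs.invSet v :=
      Set.Subset.antisymm (hmin v hUV (subset_refl _)) hv'
    rw [hA, hj, DihedralAux.bcl_self]
  · have hA : cs.invSet u ∪ cs.invSet v = cs.invSet u :=
      Set.union_eq_self_of_subset_right hVU
    have hj : cs.invSet j = cs.invSet u :=
      Set.Subset.antisymm (hmin u (subset_refl _) hVU) hu'
    rw [hA, hj, DihedralAux.bcl_self]
  · have hs0j : cs.simple 0 ∈ cs.invSet j := by
      rcases hs0 with h | h
      exacts [hu' h, hv' h]
    have hs1j : cs.simple 1 ∈ cs.invSet j := by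
      rcases hs1 with h | h
      exacts [hu' h, hv' h]
    have hfull := DihedralAux.full_invSet cs hs0j hs1j
    rw [hfull]
    apply Set.Subset.antisymm
    · have hmp := DihedralAux.m_pos_of_both cs hs0j hs1j
      refine (DihedralAux.reach cs hmp).trans (DihedralAux.bclosure_mono cs ?_)
      intro x hx
      simp only [Set.mem_insert_iff, Set.mem_singleton_iff] at hx
      rcases hx with rfl | rfl
      exacts [hs0, hs1]
    · exact DihedralAux.bclosure_subset_reflSet cs _
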